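/- For all simplicial F₂-vector spaces V, W and all i, j ≥ 0, one has D^0_{i,j} + T∘D^0_{j,i}∘T = D_{i,j} + (φ_0)_{i,j} as linear maps V_i⊗W_j → V_{i+j}⊗W_{i+j}, where in the twisted term D^0_{j,i} is evaluated on the pair (W,V). -/

import Mathlib

open scoped TensorProduct

noncomputable section

/-- A (possibly degenerate) collection of data for a simplicial `F₂`-vector space:
a family of `ZMod 2`-modules together with face maps `d n j : X n → X (n-1)`
and degeneracy maps `s n j : X n → X (n+1)`.  The simplicial identities are
required via the predicate `SVS.IsSimplicial` below. -/
structure SVS : Type 1 where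
  X : ℕ → Type
  grp : ∀ n, AddCommGroup (X n)
  mod : ∀ n, Module (ZMod 2) (X n)
  d : ∀ n, ℕ → (X n →ₗ[ZMod 2] X (n - 1))
  s : ∀ n, ℕ → (X n →ₗ[ZMod 2] X (n + 1))

attribute [instance] SVS.grp SVS.mod

namespace SVS

/-- Transport along an equality of degrees. -/
def xcast (V : SVS) {m n : ℕ} (h : m = n) : V.X m →ₗ[ZMod 2] V.X n := by
  subst h; exact LinearMap.id

/-- The simplicial identities, in the (complete) ranges where both sides make sense. -/
structure IsSimplicial (V : SVS) : Prop where
  dd : ∀ n i j, i < j → j ≤ n + 2 →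
    (V.d (n+1) i).comp (V.d (n+2) j) = (V.d (n+1) (j-1)).comp (V.d (n+2) i)
  ss : ∀ n i j, i ≤ j → j ≤ n →
    (V.s (n+1) i).comp (V.s n j) = (V.s (n+1) (j+1)).comp (V.s n i)
  ds_lt : ∀ n i j, i < j → j ≤ n + 1 →
    (V.d (n+2) i).comp (V.s (n+1) j) = (V.s n (j-1)).comp (V.d (n+1) i)
  ds_eq : ∀ n i j, (i = j ∨ i = j + 1) → j ≤ n →
    (V.d (n+1) i).comp (V.s n j) = LinearMap.id
  ds_gt : ∀ n i j, j + 1 < i → i ≤ n + 2 →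
    (V.d (n+2) i).comp (V.s (n+1) j) = (V.s n j).comp (V.d (n+1) (i-1))

/-- The suspension `S(V)`, with `S(V)_n = V_{n+1}`, `d_j = d_{j+1}`, `s_j = s_{j+1}`. -/
def susp (V : SVS) : SVS where
  X := fun n => V.X (n+1)
  grp := fun n => V.grp (n+1)
  mod := fun n => V.mod (n+1)
  d := fun n => match n with
    | 0 => fun _ => 0
    | m+1 => fun j => V.d (m+2) (j+1)
  s := fun n j => V.s (n+1) (j+1)

/-- The `k`-fold suspension `S^k(V)`, with `S^k(V)_n = V_{n+k}`, `d_j = d_{j+k}`,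
`s_j = s_{j+k}`.  Evaluating a natural transformation at `shift V k` realizes its
`k`-fold suspension ("replace every `d_r` by `d_{r+k}` and every `s_r` by `s_{r+k}`"). -/
def shift (V : SVS) (k : ℕ) : SVS where
  X := fun n => V.X (n+k)
  grp := fun n => V.grp (n+k)
  mod := fun n => V.mod (n+k)
  d := fun n j =>
    if h : 1 ≤ n then (V.xcast (by omega)).comp (V.d (n+k) (j+k)) else 0
  s := fun n j => (V.xcast (by omega)).comp (V.s (n+k) (j+k))

end SVS

/-- A simplicial map (morphism of simplicial `F₂`-vector spaces). -/
structure SMap (V W : SVS) where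
  f : ∀ n, V.X n →ₗ[ZMod 2] W.X n
  comm_d : ∀ n j, j ≤ n + 1 →
    (f n).comp (V.d (n+1) j) = (W.d (n+1) j).comp (f (n+1))
  comm_s : ∀ n j, j ≤ n →
    (f (n+1)).comp (V.s n j) = (W.s n j).comp (f n)

/-- Iterated degeneracies: `sIter V [a₁, …, aᵣ] q = s_{aᵣ} ∘ ⋯ ∘ s_{a₁}` applied from degree `q`
(the head of the list is applied first). -/
def sIter (V : SVS) : (l : List ℕ) → (q : ℕ) → (V.X q →ₗ[ZMod 2] V.X (q + l.length))
  | [], _ => LinearMap.id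
  | a :: t, q =>
    (V.xcast (show q + 1 + t.length = q + (t.length + 1) by omega)).comp
      ((sIter V t (q+1)).comp (V.s q a))

/-- Iterated degeneracies, with the target degree given explicitly. -/
def sIterTo (V : SVS) (q m : ℕ) (l : List ℕ) (h : q + l.length = m) :
    V.X q →ₗ[ZMod 2] V.X m :=
  (V.xcast h).comp (sIter V l q)

/-- `V_a ⊗ W_b` over `F₂`. -/
abbrev TT (V W : SVS) (a b : ℕ) : Type :=
  TensorProduct (ZMod 2) (V.X a) (W.X b)

/-- Transport of tensor products along equalities of degrees. -/
def tcast (V W : SVS) {a b c e : ℕ} (h1 : a = c) (h2 : b = e) :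
    TT V W a b →ₗ[ZMod 2] TT V W c e :=
  TensorProduct.map (V.xcast h1) (W.xcast h2)

/-- The twist `T : V_a ⊗ W_b → W_b ⊗ V_a`. -/
def twist (V W : SVS) (a b : ℕ) : TT V W a b →ₗ[ZMod 2] TT W V b a :=
  (TensorProduct.comm (ZMod 2) _ _).toLinearMap

/-- `(i,j)`-shuffles, encoded as pairs `(μ, ν)` of subsets of `{0, …, i+j-1}` with
`μ.card = i`, `ν.card = j`, disjoint with union everything; the increasing enumeration
of a set gives the corresponding increasing sequence. -/
def shuffles (i j : ℕ) : Finset (Finset ℕ × Finset ℕ) :=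
  ((Finset.range (i+j)).powersetCard i ×ˢ (Finset.range (i+j)).powersetCard j).filter
    fun p => Disjoint p.1 p.2 ∧ p.1 ∪ p.2 = Finset.range (i+j)

lemma shuffles_card₁ {i j : ℕ} {p : Finset ℕ × Finset ℕ} (hp : p ∈ shuffles i j) :
    p.1.card = i := by
  simp only [shuffles, Finset.mem_filter, Finset.mem_product, Finset.mem_powersetCard] at hp
  exact hp.1.1.2

lemma shuffles_card₂ {i j : ℕ} {p : Finset ℕ × Finset ℕ} (hp : p ∈ shuffles i j) :
    p.2.card = j := by
  simp only [shuffles, Finset.mem_filter, Finset.mem_product, Finset.mem_powersetCard] at hp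
  exact hp.1.2.2

/-- The increasing enumeration of a finite set of naturals. -/
def sortAsc (s : Finset ℕ) : List ℕ := s.sort (· ≤ ·)

lemma length_sortAsc (s : Finset ℕ) : (sortAsc s).length = s.card :=
  Finset.length_sort _

/-- The Eilenberg–MacLane shuffle map
`D_{i,j} = Σ_{(i,j)-shuffles (μ,ν)} (s_{ν_j}⋯s_{ν_1}) ⊗ (s_{μ_i}⋯s_{μ_1}) :
V_i ⊗ W_j → V_{i+j} ⊗ W_{i+j}`. -/
def Dmap (V W : SVS) (i j : ℕ) : TT V W i j →ₗ[ZMod 2] TT V W (i+j) (i+j) :=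
  ∑ p ∈ (shuffles i j).attach,
    TensorProduct.map
      (sIterTo V i (i+j) (sortAsc p.1.2) (by rw [length_sortAsc, shuffles_card₂ p.2]))
      (sIterTo W j (i+j) (sortAsc p.1.1) (by rw [length_sortAsc, shuffles_card₁ p.2]; omega))

open SVS in
/-- `D⁰_{i,j} = S(D_{i-1,j}) ∘ (id ⊗ s₀)`, zero when `i = 0`. -/
def D0 (V W : SVS) : (i j : ℕ) → (TT V W i j →ₗ[ZMod 2] TT V W (i+j) (i+j))
  | 0, _ => 0
  | i'+1, j =>
    (tcast V W (show i'+j+1 = i'+1+j by omega) (show i'+j+1 = i'+1+j by omega)).comp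
      ((Dmap (susp V) (susp W) i' j).comp
        (TensorProduct.map LinearMap.id (W.s j 0)))

open SVS in
/-- The higher Eilenberg–MacLane maps `D^k_{i,j} : V_i ⊗ W_j → V_{i+j-k} ⊗ W_{i+j-k}`,
defined recursively: `D^0` as above, and for `k ≥ 1`,
`D^k_{i,j} = S(D^{k-1}_{i-1,j-1}) + D^{k-1}_{i-1,j}∘(d₀⊗id)` (`k` even),
`D^k_{i,j} = S(D^{k-1}_{i-1,j-1}) + D^{k-1}_{i,j-1}∘(id⊗d₀)` (`k` odd);
any term involving a negative index is zero. -/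
def Dk : (k : ℕ) → (V W : SVS) → (i j : ℕ) →
    (TT V W i j →ₗ[ZMod 2] TT V W (i+j-k) (i+j-k))
  | 0, V, W, i, j => D0 V W i j
  | k+1, V, W, i, j =>
    (match i, j with
     | i'+1, j'+1 =>
       if h : k ≤ i' + j' then
         (tcast V W (show i'+j'-k+1 = i'+1+(j'+1)-(k+1) by omega)
            (show i'+j'-k+1 = i'+1+(j'+1)-(k+1) by omega)).comp
           (Dk k (susp V) (susp W) i' j')
       else 0
     | _, _ => 0)
    +
    (if (k+1) % 2 = 0 then
      (match i with
       | 0 => 0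
       | i'+1 =>
         (tcast V W (show i'+j-k = i'+1+j-(k+1) by omega)
            (show i'+j-k = i'+1+j-(k+1) by omega)).comp
           ((Dk k V W i' j).comp (TensorProduct.map (V.d (i'+1) 0) LinearMap.id)))
     else
      (match j with
       | 0 => 0
       | j'+1 =>
         (tcast V W (show i+j'-k = i+(j'+1)-(k+1) by omega)
            (show i+j'-k = i+(j'+1)-(k+1) by omega)).comp
           ((Dk k V W i j').comp (TensorProduct.map LinearMap.id (W.d (j'+1) 0)))))

/-- `φ_k : V_i ⊗ W_j → V_{i+j-k} ⊗ W_{i+j-k}`: the identity if `i = j = k`, zero otherwise. -/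
def phi (V W : SVS) (k i j : ℕ) : TT V W i j →ₗ[ZMod 2] TT V W (i+j-k) (i+j-k) :=
  if h : i = k ∧ j = k then
    tcast V W (show i = i+j-k by rcases h with ⟨h1, h2⟩; omega)
      (show j = i+j-k by rcases h with ⟨h1, h2⟩; omega)
  else 0

/-- `∂ ⊗ id = Σ_{0 ≤ r ≤ a} d_r ⊗ id : V_a ⊗ W_b → V_{a-1} ⊗ W_b`. -/
def bdryL (V W : SVS) (a b : ℕ) : TT V W a b →ₗ[ZMod 2] TT V W (a-1) b :=
  ∑ r ∈ Finset.range (a+1), TensorProduct.map (V.d a r) LinearMap.id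

/-- `id ⊗ ∂ = Σ_{0 ≤ r ≤ b} id ⊗ d_r : V_a ⊗ W_b → V_a ⊗ W_{b-1}`. -/
def bdryR (V W : SVS) (a b : ℕ) : TT V W a b →ₗ[ZMod 2] TT V W a (b-1) :=
  ∑ r ∈ Finset.range (b+1), TensorProduct.map LinearMap.id (W.d b r)

/-- `δ = Σ_{0 ≤ r ≤ min a b} d_r ⊗ d_r : V_a ⊗ W_b → V_{a-1} ⊗ W_{b-1}`. -/
def delMap (V W : SVS) (a b : ℕ) : TT V W a b →ₗ[ZMod 2] TT V W (a-1) (b-1) :=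
  ∑ r ∈ Finset.range (min a b + 1), TensorProduct.map (V.d a r) (W.d b r)

/-- The twisted map `T ∘ D⁰_{j,i} ∘ T : V_i ⊗ W_j → V_{i+j} ⊗ W_{i+j}`
(`D⁰_{j,i}` evaluated on the pair `(W, V)`). -/
def TD0T (V W : SVS) (i j : ℕ) : TT V W i j →ₗ[ZMod 2] TT V W (i+j) (i+j) :=
  (tcast V W (show j+i = i+j by omega) (show j+i = i+j by omega)).comp
    ((twist W V (j+i) (j+i)).comp ((D0 W V j i).comp (twist V W i j)))

/-- The twisted map `T ∘ D^k_{j,i} ∘ T : V_i ⊗ W_j → V_{i+j-k} ⊗ W_{i+j-k}`. -/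
def TDkT (k : ℕ) (V W : SVS) (i j : ℕ) : TT V W i j →ₗ[ZMod 2] TT V W (i+j-k) (i+j-k) :=
  (tcast V W (show j+i-k = i+j-k by omega) (show j+i-k = i+j-k by omega)).comp
    ((twist W V (j+i-k) (j+i-k)).comp ((Dk k W V j i).comp (twist V W i j)))

open SVS in
/-- `A⁰ = D⁰ + TD⁰T + D`, and for `k ≥ 1`
`A^k = D^k + TD^kT + δ∘D^{k-1} + D^{k-1}∘(∂⊗id) + D^{k-1}∘(id⊗∂)`
(terms with a negative index being zero). -/
def Ak : (k : ℕ) → (V W : SVS) → (i j : ℕ) →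
    (TT V W i j →ₗ[ZMod 2] TT V W (i+j-k) (i+j-k))
  | 0, V, W, i, j => D0 V W i j + TD0T V W i j + Dmap V W i j
  | k+1, V, W, i, j =>
    Dk (k+1) V W i j + TDkT (k+1) V W i j
    + (tcast V W (show i+j-k-1 = i+j-(k+1) by omega)
        (show i+j-k-1 = i+j-(k+1) by omega)).comp
        ((delMap V W (i+j-k) (i+j-k)).comp (Dk k V W i j))
    + (match i with
       | 0 => 0
       | i'+1 =>
         (tcast V W (show i'+j-k = i'+1+j-(k+1) by omega)
            (show i'+j-k = i'+1+j-(k+1) by omega)).comp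
           ((Dk k V W i' j).comp (bdryL V W (i'+1) j)))
    + (match j with
       | 0 => 0
       | j'+1 =>
         (tcast V W (show i+j'-k = i+(j'+1)-(k+1) by omega)
            (show i+j'-k = i+(j'+1)-(k+1) by omega)).comp
           ((Dk k V W i j').comp (bdryR V W i (j'+1))))

open SVS in
/-- The suspension term `S(A^k_{i-1,j-1}) : V_i ⊗ W_j → V_{i+j-(k+1)} ⊗ W_{i+j-(k+1)}`
(zero if a negative index occurs). -/
def AsuspTerm (k : ℕ) (V W : SVS) (i j : ℕ) :
    TT V W i j →ₗ[ZMod 2] TT V W (i+j-(k+1)) (i+j-(k+1)) :=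
  match i, j with
  | i'+1, j'+1 =>
    if h : k ≤ i' + j' then
      (tcast V W (show i'+j'-k+1 = i'+1+(j'+1)-(k+1) by omega)
         (show i'+j'-k+1 = i'+1+(j'+1)-(k+1) by omega)).comp
        (Ak k (susp V) (susp W) i' j')
    else 0
  | _, _ => 0

/-- The term `A^k_{i-1,j} ∘ (d₀ ⊗ id) : V_i ⊗ W_j → V_{i+j-(k+1)} ⊗ W_{i+j-(k+1)}`
(zero if `i = 0`). -/
def Ad0Term (k : ℕ) (V W : SVS) (i j : ℕ) :
    TT V W i j →ₗ[ZMod 2] TT V W (i+j-(k+1)) (i+j-(k+1)) :=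
  match i with
  | 0 => 0
  | i'+1 =>
    (tcast V W (show i'+j-k = i'+1+j-(k+1) by omega)
       (show i'+j-k = i'+1+j-(k+1) by omega)).comp
      ((Ak k V W i' j).comp (TensorProduct.map (V.d (i'+1) 0) LinearMap.id))

/-- The term `A^k_{i,j-1} ∘ (id ⊗ d₀) : V_i ⊗ W_j → V_{i+j-(k+1)} ⊗ W_{i+j-(k+1)}`
(zero if `j = 0`). -/
def Aid0Term (k : ℕ) (V W : SVS) (i j : ℕ) :
    TT V W i j →ₗ[ZMod 2] TT V W (i+j-(k+1)) (i+j-(k+1)) :=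
  match j with
  | 0 => 0
  | j'+1 =>
    (tcast V W (show i+j'-k = i+(j'+1)-(k+1) by omega)
       (show i+j'-k = i+(j'+1)-(k+1) by omega)).comp
      ((Ak k V W i j').comp (TensorProduct.map LinearMap.id (W.d (j'+1) 0)))

/-- The index set `V(q,i)`: pairs `(μ, ν)` of `i`-element subsets of
`{q-i, …, q+i-1}`, disjoint with union everything, and `q-i ∈ μ`
(i.e. `μ₁ = q-i` for the increasing enumerations). -/
def deltaSet (q i : ℕ) : Finset (Finset ℕ × Finset ℕ) :=
  ((Finset.Ico (q-i) (q+i)).powersetCard i ×ˢ (Finset.Ico (q-i) (q+i)).powersetCard i).filter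
    fun p => Disjoint p.1 p.2 ∧ p.1 ∪ p.2 = Finset.Ico (q-i) (q+i) ∧ q-i ∈ p.1

lemma deltaSet_card₁ {q i : ℕ} {p : Finset ℕ × Finset ℕ} (hp : p ∈ deltaSet q i) :
    p.1.card = i := by
  simp only [deltaSet, Finset.mem_filter, Finset.mem_product, Finset.mem_powersetCard] at hp
  exact hp.1.1.2

lemma deltaSet_card₂ {q i : ℕ} {p : Finset ℕ × Finset ℕ} (hp : p ∈ deltaSet q i) :
    p.2.card = i := by
  simp only [deltaSet, Finset.mem_filter, Finset.mem_product, Finset.mem_powersetCard] at hp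
  exact hp.1.2.2

/-- Data of a simplicial commutative `F₂`-algebra: a family of commutative
`ZMod 2`-algebras with face and degeneracy maps which are algebra maps;
the simplicial identities are required via `SAlg.IsSimplicial`. -/
structure SAlg : Type 1 where
  X : ℕ → Type
  ring : ∀ n, CommRing (X n)
  alg : ∀ n, Algebra (ZMod 2) (X n)
  d : ∀ n, ℕ → (X n →ₐ[ZMod 2] X (n - 1))
  s : ∀ n, ℕ → (X n →ₐ[ZMod 2] X (n + 1))

attribute [instance] SAlg.ring SAlg.alg

namespace SAlg

def acast (R : SAlg) {m n : ℕ} (h : m = n) : R.X m →ₐ[ZMod 2] R.X n := by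
  subst h; exact AlgHom.id _ _

structure IsSimplicial (R : SAlg) : Prop where
  dd : ∀ n i j, i < j → j ≤ n + 2 →
    (R.d (n+1) i).comp (R.d (n+2) j) = (R.d (n+1) (j-1)).comp (R.d (n+2) i)
  ss : ∀ n i j, i ≤ j → j ≤ n →
    (R.s (n+1) i).comp (R.s n j) = (R.s (n+1) (j+1)).comp (R.s n i)
  ds_lt : ∀ n i j, i < j → j ≤ n + 1 →
    (R.d (n+2) i).comp (R.s (n+1) j) = (R.s n (j-1)).comp (R.d (n+1) i)
  ds_eq : ∀ n i j, (i = j ∨ i = j + 1) → j ≤ n →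
    (R.d (n+1) i).comp (R.s n j) = AlgHom.id _ _
  ds_gt : ∀ n i j, j + 1 < i → i ≤ n + 2 →
    (R.d (n+2) i).comp (R.s (n+1) j) = (R.s n j).comp (R.d (n+1) (i-1))

/-- The underlying simplicial `F₂`-vector space of a simplicial `F₂`-algebra. -/
def toSVS (R : SAlg) : SVS where
  X := R.X
  grp := fun n => inferInstance
  mod := fun n => inferInstance
  d := fun n j => (R.d n j).toLinearMap
  s := fun n j => (R.s n j).toLinearMap

end SAlg

/-- Iterated degeneracies for a simplicial algebra (head of the list applied first). -/
def sIterA (R : SAlg) : (l : List ℕ) → (q : ℕ) → (R.X q →ₐ[ZMod 2] R.X (q + l.length))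
  | [], _ => AlgHom.id _ _
  | a :: t, q =>
    (R.acast (show q + 1 + t.length = q + (t.length + 1) by omega)).comp
      ((sIterA R t (q+1)).comp (R.s q a))

def sIterATo (R : SAlg) (q m : ℕ) (l : List ℕ) (h : q + l.length = m) :
    R.X q →ₐ[ZMod 2] R.X m :=
  (R.acast h).comp (sIterA R l q)

/-- The explicit formula
`δ_i(z) = Σ_{(μ,ν) ∈ V(q,i)} s_{ν_i}⋯s_{ν_1}(z) · s_{μ_i}⋯s_{μ_1}(z) ∈ R_{q+i}`. -/
def deltaOp (R : SAlg) (q i : ℕ) (z : R.X q) : R.X (q+i) :=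
  ∑ p ∈ (deltaSet q i).attach,
    (sIterATo R q (q+i) (sortAsc p.1.2)
        (by rw [length_sortAsc, deltaSet_card₂ p.2]) z)
      * (sIterATo R q (q+i) (sortAsc p.1.1)
        (by rw [length_sortAsc, deltaSet_card₁ p.2]) z)

/-- Multiplication `μ : R_m ⊗ R_m → R_m` as a linear map. -/
def mulMap (R : SAlg) (m : ℕ) :
    TensorProduct (ZMod 2) (R.X m) (R.X m) →ₗ[ZMod 2] R.X m :=
  TensorProduct.lift (LinearMap.mul (ZMod 2) (R.X m))

open SimplexCategory CategoryTheory in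
/-- The suspension `S′(α)` of a morphism `α : [m] → [n]` in the simplex category:
`S′(α)(0) = 0` and `S′(α)(i) = α(i-1) + 1` for `i ≥ 1`. -/
def suspMor {x y : SimplexCategory} (f : x ⟶ y) :
    SimplexCategory.mk (x.len + 1) ⟶ SimplexCategory.mk (y.len + 1) :=
  SimplexCategory.mkHom
    { toFun := fun i => Fin.cases 0 (fun i' => (f.toOrderHom i').succ) i
      monotone' := by
        intro a b hab
        induction a using Fin.cases with
        | zero => simp [Fin.zero_le]
        | succ a' =>
          induction b using Fin.cases with
          | zero =>
            exact absurd (Fin.le_zero_iff.mp hab) (Fin.succ_ne_zero a')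
          | succ b' =>
            simp only [Fin.cases_succ]
            exact Fin.succ_le_succ_iff.mpr
              (f.toOrderHom.monotone (Fin.succ_le_succ_iff.mp hab)) }

open SimplexCategory CategoryTheory in
/-- The suspension functor `S′ : Δ → Δ`, `[n] ↦ [n+1]`,
`(S′α)(0) = 0`, `(S′α)(i) = α(i-1)+1` for `i ≥ 1`. -/
def suspFunctor : CategoryTheory.Functor SimplexCategory SimplexCategory where
  obj x := SimplexCategory.mk (x.len + 1)
  map f := suspMor f
  map_id x := by
    apply SimplexCategory.Hom.ext
    ext i
    induction i using Fin.cases with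
    | zero => rfl
    | succ i' => rfl
  map_comp f g := by
    apply SimplexCategory.Hom.ext
    ext i
    induction i using Fin.cases with
    | zero => rfl
    | succ i' => rfl

open SVS in
/-- The term `S(δ ∘ D_{i-1,j}) ∘ (id ⊗ s₀) : V_i ⊗ W_j → V_{i+j-1} ⊗ W_{i+j-1}`,
i.e. the suspension of the composite `δ ∘ D_{i-1,j} : V_{i-1} ⊗ W_j → V_{i+j-2} ⊗ W_{i+j-2}`
(evaluated at the suspended simplicial vector spaces), precomposed with `id ⊗ s₀`;
any term involving a negative index is zero. -/
def SdelDTerm (V W : SVS) (i j : ℕ) : TT V W i j →ₗ[ZMod 2] TT V W (i+j-1) (i+j-1) :=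
  match i with
  | 0 => 0
  | i'+1 =>
    if h : 1 ≤ i' + j then
      ((tcast V W (show i'+j-1+1 = i'+1+j-1 by omega) (show i'+j-1+1 = i'+1+j-1 by omega)).comp
        ((delMap (susp V) (susp W) (i'+j) (i'+j)).comp
          (Dmap (susp V) (susp W) i' j))).comp
        (TensorProduct.map LinearMap.id (W.s j 0))
    else 0

/-- The term `D_{i-1,j} ∘ (d₀ ⊗ id) : V_i ⊗ W_j → V_{i+j-1} ⊗ W_{i+j-1}`
(zero if `i = 0`). -/
def Dd0Term (V W : SVS) (i j : ℕ) : TT V W i j →ₗ[ZMod 2] TT V W (i+j-1) (i+j-1) :=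
  match i with
  | 0 => 0
  | i'+1 =>
    (tcast V W (show i'+j = i'+1+j-1 by omega) (show i'+j = i'+1+j-1 by omega)).comp
      ((Dmap V W i' j).comp (TensorProduct.map (V.d (i'+1) 0) LinearMap.id))

namespace Stmt7Aux
open SVS

lemma xcast_xcast (V : SVS) {a b c : ℕ} (h1 : a = b) (h2 : b = c) :
    (V.xcast h2).comp (V.xcast h1) = V.xcast (h1.trans h2) := by subst h1; subst h2; rfl

/-- total version of `sIterTo` -/
def sI (V : SVS) (q m : ℕ) (l : List ℕ) : V.X q →ₗ[ZMod 2] V.X m :=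
  if h : q + l.length = m then sIterTo V q m l h else 0

lemma sI_nil (V : SVS) {q m : ℕ} (h : q = m) : sI V q m [] = V.xcast h := by
  subst h
  simp only [sI, List.length_nil, Nat.add_zero, dif_pos]
  rfl

lemma sI_cons (V : SVS) (q m a : ℕ) (l : List ℕ) :
    sI V q m (a :: l) = (sI V (q+1) m l).comp (V.s q a) := by
  by_cases h : q + (a :: l).length = m
  · have h' : (q+1) + l.length = m := by simp at h ⊢; omega
    rw [sI, dif_pos h, sI, dif_pos h']
    simp only [sIterTo, sIter, ← LinearMap.comp_assoc, xcast_xcast]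
  · have h' : ¬ ((q+1) + l.length = m) := by simp at h ⊢; omega
    rw [sI, dif_neg h, sI, dif_neg h', LinearMap.zero_comp]

lemma xcast_comp_sI (V : SVS) (q m m' : ℕ) (h : m = m') (l : List ℕ) :
    (V.xcast h).comp (sI V q m l) = sI V q m' l := by
  subst h; exact LinearMap.id_comp _

lemma sI_susp (V : SVS) (q m : ℕ) (l : List ℕ) :
    sI (susp V) q m l = sI V (q+1) (m+1) (l.map (·+1)) := by
  induction l generalizing q with
  | nil =>
    by_cases h : q = m
    · subst h; rw [sI_nil _ rfl]; rw [show (List.map (·+1) [] : List ℕ) = [] from rfl,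
        sI_nil _ rfl]; rfl
    · rw [sI, dif_neg (by simpa using h), sI, dif_neg (by simpa using h)]; rfl
  | cons a t ih =>
    rw [show List.map (·+1) (a :: t) = (a+1) :: List.map (·+1) t from rfl,
      sI_cons, sI_cons, ih]
    rfl

end Stmt7Aux
namespace Stmt7Aux

/-- The generic summand of the shuffle map. -/
def Term (V W : SVS) (i j m : ℕ) (p : Finset ℕ × Finset ℕ) :
    TT V W i j →ₗ[ZMod 2] TT V W m m :=
  TensorProduct.map (sI V i m (sortAsc p.2)) (sI W j m (sortAsc p.1))

lemma Dmap_eq (V W : SVS) (i j : ℕ) :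
    Dmap V W i j = ∑ p ∈ shuffles i j, Term V W i j (i+j) p := by
  rw [Dmap, ← Finset.sum_attach (shuffles i j) (fun p => Term V W i j (i+j) p)]
  refine Finset.sum_congr rfl fun p _ => ?_
  have h1 : i + (sortAsc p.1.2).length = i + j := by
    rw [length_sortAsc, shuffles_card₂ p.2]
  have h2 : j + (sortAsc p.1.1).length = i + j := by
    rw [length_sortAsc, shuffles_card₁ p.2]; omega
  rw [Term, sI, dif_pos h1, sI, dif_pos h2]

lemma tcast_comp_map (V W : SVS) {a b c e a' b' : ℕ} (h1 : c = a') (h2 : e = b')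
    (f : V.X a →ₗ[ZMod 2] V.X c) (g : W.X b →ₗ[ZMod 2] W.X e) :
    (tcast V W h1 h2).comp (TensorProduct.map f g)
      = TensorProduct.map ((V.xcast h1).comp f) ((W.xcast h2).comp g) := by
  rw [tcast, ← TensorProduct.map_comp]

lemma twist_map_twist (V W : SVS) {a b c e : ℕ}
    (f : V.X a →ₗ[ZMod 2] V.X c) (g : W.X b →ₗ[ZMod 2] W.X e) :
    (twist W V e c).comp ((TensorProduct.map g f).comp (twist V W a b))
      = TensorProduct.map f g := by
  apply TensorProduct.ext'
  intro x y
  simp [twist]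

lemma sortAsc_image_succ (s : Finset ℕ) :
    sortAsc (s.image (·+1)) = (sortAsc s).map (·+1) := by
  refine (fun hp h1 h2 => List.Perm.eq_of_pairwise' (r := (· ≤ ·)) h1 h2 hp) ?_ ?_ ?_
  · rw [← Multiset.coe_eq_coe]
    rw [sortAsc, sortAsc, ← Multiset.map_coe, Finset.sort_eq, Finset.sort_eq,
      Finset.image_val_of_injOn]
    intro x _ y _ h
    simp only at h
    omega
  · exact Finset.pairwise_sort _ _
  · exact List.Pairwise.map _ (fun a b h => by omega) (Finset.pairwise_sort s (· ≤ ·))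

lemma sortAsc_insert_zero (s : Finset ℕ) (hs : 0 ∉ s) :
    sortAsc (insert 0 s) = 0 :: sortAsc s :=
  Finset.sort_insert _ (fun b _ => Nat.zero_le b) hs

lemma mem_shuffles {i j : ℕ} {p : Finset ℕ × Finset ℕ} :
    p ∈ shuffles i j ↔ p.1.card = i ∧ p.2.card = j ∧ Disjoint p.1 p.2
      ∧ p.1 ∪ p.2 = Finset.range (i+j) := by
  simp only [shuffles, Finset.mem_filter, Finset.mem_product, Finset.mem_powersetCard]
  constructor
  · rintro ⟨⟨⟨-, h1⟩, -, h2⟩, h3, h4⟩; exact ⟨h1, h2, h3, h4⟩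
  · rintro ⟨h1, h2, h3, h4⟩
    refine ⟨⟨⟨?_, h1⟩, ?_, h2⟩, h3, h4⟩
    · rw [← h4]; exact Finset.subset_union_left
    · rw [← h4]; exact Finset.subset_union_right

end Stmt7Aux
namespace Stmt7Aux

lemma succ_injOn (s : Finset ℕ) : Set.InjOn (·+1) s := by
  intro x _ y _ h; simp only at h; omega

lemma image_succ_card (s : Finset ℕ) : (s.image (·+1)).card = s.card :=
  Finset.card_image_of_injOn (succ_injOn s)

lemma zero_not_mem_image_succ (s : Finset ℕ) : 0 ∉ s.image (·+1) := by
  simp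

lemma image_pred_image_succ (s : Finset ℕ) : (s.image (·+1)).image (· - 1) = s := by
  rw [Finset.image_image]
  have : ∀ x ∈ s, ((· - 1) ∘ (·+1)) x = id x := by intro x _; simp
  rw [Finset.image_congr this, Finset.image_id]

lemma image_succ_image_pred (s : Finset ℕ) (hs : 0 ∉ s) :
    (s.image (· - 1)).image (·+1) = s := by
  rw [Finset.image_image]
  have : ∀ x ∈ s, ((·+1) ∘ (· - 1)) x = id x := by
    intro x hx
    have : x ≠ 0 := fun h => hs (h ▸ hx)
    simp only [Function.comp_apply, id_eq]
    omega
  rw [Finset.image_congr this, Finset.image_id]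

lemma sum_shuffles_shift {M : Type*} [AddCommMonoid M] (i j : ℕ)
    (f : Finset ℕ × Finset ℕ → M) :
    ∑ p ∈ shuffles i j, f (insert 0 (p.1.image (·+1)), p.2.image (·+1))
      = ∑ q ∈ (shuffles (i+1) j).filter (fun q => 0 ∈ q.1), f q := by
  refine Finset.sum_nbij' (i := fun p => (insert 0 (p.1.image (·+1)), p.2.image (·+1)))
    (j := fun q => ((q.1.erase 0).image (· - 1), q.2.image (· - 1)))
    ?_ ?_ ?_ ?_ (fun _ _ => rfl)
  · -- forward membership
    intro p hp
    rw [mem_shuffles] at hp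
    obtain ⟨h1, h2, h3, h4⟩ := hp
    have hmem : ∀ x, (x ∈ p.1 ∨ x ∈ p.2) ↔ x < i + j := by
      intro x; rw [← Finset.mem_union, h4, Finset.mem_range]
    rw [Finset.mem_filter, mem_shuffles]
    refine ⟨⟨?_, ?_, ?_, ?_⟩, Finset.mem_insert_self _ _⟩
    · rw [Finset.card_insert_of_notMem (zero_not_mem_image_succ _), image_succ_card, h1]
    · rw [image_succ_card, h2]
    · rw [Finset.disjoint_left]
      intro x hx hx'
      simp only [Finset.mem_insert, Finset.mem_image] at hx hx'
      obtain ⟨b, hb, hb'⟩ := hx'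
      rcases hx with rfl | ⟨a, ha, ha'⟩
      · omega
      · have : a = b := by omega
        subst this
        exact (Finset.disjoint_left.mp h3 ha) hb
    · ext x
      simp only [Finset.mem_union, Finset.mem_insert, Finset.mem_image, Finset.mem_range]
      constructor
      · rintro ((rfl | ⟨a, ha, ha'⟩) | ⟨a, ha, ha'⟩)
        · omega
        · have := (hmem a).mp (Or.inl ha); omega
        · have := (hmem a).mp (Or.inr ha); omega
      · intro hx
        rcases Nat.eq_zero_or_pos x with rfl | hxpos
        · exact Or.inl (Or.inl rfl)
        · have := (hmem (x-1)).mpr (by omega)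
          rcases this with h | h
          · exact Or.inl (Or.inr ⟨x-1, h, by omega⟩)
          · exact Or.inr ⟨x-1, h, by omega⟩
  · -- backward membership
    intro q hq
    rw [Finset.mem_filter, mem_shuffles] at hq
    obtain ⟨⟨h1, h2, h3, h4⟩, h0⟩ := hq
    have hmem : ∀ x, (x ∈ q.1 ∨ x ∈ q.2) ↔ x < i + 1 + j := by
      intro x; rw [← Finset.mem_union, h4, Finset.mem_range]
    have hq2ne : ∀ x ∈ q.2, x ≠ 0 := by
      intro x hx hx0
      exact (Finset.disjoint_left.mp h3 h0) (hx0 ▸ hx)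
    have herane : ∀ x ∈ q.1.erase 0, x ≠ 0 := fun x hx => (Finset.mem_erase.mp hx).1
    rw [mem_shuffles]
    refine ⟨?_, ?_, ?_, ?_⟩
    · rw [Finset.card_image_of_injOn (fun x hx y hy h => by
        have h' : x - 1 = y - 1 := h
        have := herane x hx; have := herane y hy; omega),
        Finset.card_erase_of_mem h0, h1]
      omega
    · rw [Finset.card_image_of_injOn (fun x hx y hy h => by
        have h' : x - 1 = y - 1 := h
        have := hq2ne x hx; have := hq2ne y hy; omega), h2]
    · rw [Finset.disjoint_left]
      rintro x hx hx'
      simp only [Finset.mem_image, Finset.mem_erase] at hx hx'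
      obtain ⟨a, ⟨ha0, ha⟩, ha'⟩ := hx
      obtain ⟨b, hb, hb'⟩ := hx'
      have hb0 := hq2ne b hb
      have : a = b := by omega
      subst this
      exact (Finset.disjoint_left.mp h3 ha) hb
    · ext x
      simp only [Finset.mem_union, Finset.mem_image, Finset.mem_erase, Finset.mem_range]
      constructor
      · rintro (⟨a, ⟨ha0, ha⟩, ha'⟩ | ⟨a, ha, ha'⟩)
        · have := (hmem a).mp (Or.inl ha); omega
        · have := (hmem a).mp (Or.inr ha)
          have := hq2ne a ha
          omega
      · intro hx
        have := (hmem (x+1)).mpr (by omega)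
        rcases this with h | h
        · exact Or.inl ⟨x+1, ⟨by omega, h⟩, by omega⟩
        · exact Or.inr ⟨x+1, h, by omega⟩
  · -- left inverse
    intro p hp
    rw [mem_shuffles] at hp
    ext1
    · show ((insert 0 (p.1.image (·+1))).erase 0).image (· - 1) = p.1
      rw [Finset.erase_insert (zero_not_mem_image_succ _), image_pred_image_succ]
    · show (p.2.image (·+1)).image (· - 1) = p.2
      rw [image_pred_image_succ]
  · -- right inverse
    intro q hq
    rw [Finset.mem_filter, mem_shuffles] at hq
    obtain ⟨⟨h1, h2, h3, h4⟩, h0⟩ := hq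
    have hq2ne : 0 ∉ q.2 := fun hx0 => (Finset.disjoint_left.mp h3 h0) hx0
    ext1
    · show insert 0 (((q.1.erase 0).image (· - 1)).image (·+1)) = q.1
      rw [image_succ_image_pred _ (fun h => (Finset.mem_erase.mp h).1 rfl),
        Finset.insert_erase h0]
    · show ((q.2.image (· - 1)).image (·+1)) = q.2
      rw [image_succ_image_pred _ hq2ne]

lemma sum_shuffles_swap {M : Type*} [AddCommMonoid M] (i j : ℕ)
    (f : Finset ℕ × Finset ℕ → M) :
    ∑ q ∈ (shuffles j i).filter (fun q => 0 ∈ q.1), f q.swap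
      = ∑ p ∈ (shuffles i j).filter (fun p => 0 ∈ p.2), f p := by
  refine Finset.sum_nbij' (i := Prod.swap) (j := Prod.swap)
    ?_ ?_ (fun _ _ => rfl) (fun _ _ => rfl) (fun _ _ => rfl)
  · intro q hq
    rw [Finset.mem_filter, mem_shuffles] at hq ⊢
    obtain ⟨⟨h1, h2, h3, h4⟩, h0⟩ := hq
    exact ⟨⟨h2, h1, h3.symm, by rw [Finset.union_comm, Nat.add_comm i j]; exact h4⟩, h0⟩
  · intro p hp
    rw [Finset.mem_filter, mem_shuffles] at hp ⊢
    obtain ⟨⟨h1, h2, h3, h4⟩, h0⟩ := hp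
    exact ⟨⟨h2, h1, h3.symm, by rw [Finset.union_comm, Nat.add_comm j i]; exact h4⟩, h0⟩

end Stmt7Aux
namespace Stmt7Aux
open SVS

variable {R : Type*} [CommSemiring R] {A B C : Type*}
  [AddCommMonoid A] [AddCommMonoid B] [AddCommMonoid C]
  [Module R A] [Module R B] [Module R C]

lemma lsum_comp {ι : Type*} (s : Finset ι) (f : ι → (B →ₗ[R] C)) (g : A →ₗ[R] B) :
    (∑ x ∈ s, f x).comp g = ∑ x ∈ s, (f x).comp g := by
  ext v
  simp [LinearMap.sum_apply]

lemma lcomp_sum {ι : Type*} (s : Finset ι) (g : B →ₗ[R] C) (f : ι → (A →ₗ[R] B)) :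
    g.comp (∑ x ∈ s, f x) = ∑ x ∈ s, g.comp (f x) := by
  ext v
  simp [LinearMap.sum_apply, map_sum]

lemma xcast_id (V : SVS) {m : ℕ} (h : m = m) : V.xcast h = LinearMap.id := rfl

lemma D0_eq (V W : SVS) (i j : ℕ) :
    D0 V W i j = ∑ p ∈ (shuffles i j).filter (fun p => 0 ∈ p.1), Term V W i j (i+j) p := by
  match i with
  | 0 =>
    rw [show D0 V W 0 j = 0 from rfl]
    symm
    apply Finset.sum_eq_zero
    intro p hp
    rw [Finset.mem_filter, mem_shuffles] at hp
    obtain ⟨⟨h1, -, -, -⟩, h0⟩ := hp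
    rw [Finset.card_eq_zero] at h1
    rw [h1] at h0
    exact absurd h0 (Finset.notMem_empty 0)
  | i'+1 =>
    calc D0 V W (i'+1) j
        = ∑ p ∈ shuffles i' j,
            Term V W (i'+1) j (i'+1+j) (insert 0 (p.1.image (·+1)), p.2.image (·+1)) := ?_
      _ = _ := sum_shuffles_shift i' j _
    show (tcast V W (by omega) (by omega)).comp
      ((Dmap (susp V) (susp W) i' j).comp
        (TensorProduct.map LinearMap.id (W.s j 0))) = _
    rw [Dmap_eq, lsum_comp]; erw [lcomp_sum]
    refine Finset.sum_congr rfl fun p hp => ?_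
    rw [Term, Term, sI_susp, sI_susp]
    change (tcast V W (a := i'+j+1) (b := i'+j+1) _ _).comp
      ((TensorProduct.map (sI V (i'+1) (i'+j+1) (List.map (·+1) (sortAsc p.2)))
        (sI W (j+1) (i'+j+1) (List.map (·+1) (sortAsc p.1)))).comp
        (TensorProduct.map (LinearMap.id : V.X (i'+1) →ₗ[ZMod 2] V.X (i'+1)) (W.s j 0))) = _
    rw [← TensorProduct.map_comp, LinearMap.comp_id,
      ← sI_cons, tcast_comp_map, xcast_comp_sI, xcast_comp_sI,
      ← sortAsc_image_succ, ← sortAsc_image_succ,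
      ← sortAsc_insert_zero _ (zero_not_mem_image_succ _)]

lemma TD0T_eq (V W : SVS) (i j : ℕ) :
    TD0T V W i j = ∑ p ∈ (shuffles i j).filter (fun p => 0 ∈ p.2), Term V W i j (i+j) p := by
  rw [TD0T, D0_eq W V j i, lsum_comp, lcomp_sum, lcomp_sum,
    ← sum_shuffles_swap i j (Term V W i j (i+j))]
  refine Finset.sum_congr rfl fun q hq => ?_
  rw [Term, twist_map_twist, tcast_comp_map, xcast_comp_sI, xcast_comp_sI]
  rfl

end Stmt7Aux
open Stmt7Aux

theorem stmt_7 (V W : SVS) (hV : V.IsSimplicial) (hW : W.IsSimplicial) (i j : ℕ) :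
    D0 V W i j + TD0T V W i j
      = Dmap V W i j
        + (tcast V W (show i+j-0 = i+j by omega) (show i+j-0 = i+j by omega)).comp
            (phi V W 0 i j) := by
  by_cases h00 : i = 0 ∧ j = 0
  · obtain ⟨rfl, rfl⟩ := h00
    have hD0 : D0 V W 0 0 = 0 := rfl
    have hT : TD0T V W 0 0 = 0 := by
      rw [TD0T, show D0 W V 0 0 = 0 from rfl]
      simp
    have hsh : shuffles 0 0 = {((∅ : Finset ℕ), (∅ : Finset ℕ))} := by
      ext p
      rw [mem_shuffles, Finset.mem_singleton]
      constructor
      · rintro ⟨h1, h2, -, -⟩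
        rw [Finset.card_eq_zero] at h1 h2
        rw [Prod.ext_iff]
        exact ⟨h1, h2⟩
      · rintro rfl
        simp
    have hphi : (tcast V W (show 0+0-0 = 0+0 by omega) (show 0+0-0 = 0+0 by omega)).comp
        (phi V W 0 0 0) = Dmap V W 0 0 := by
      rw [phi, dif_pos ⟨rfl, rfl⟩, Dmap_eq, hsh, Finset.sum_singleton, Term]
      apply TensorProduct.ext'
      intro x y
      have h1 : sI V 0 0 (sortAsc (∅ : Finset ℕ)) = LinearMap.id := by
        rw [sortAsc, Finset.sort_empty, sI_nil V rfl, xcast_id]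
      have h2 : sI W 0 0 (sortAsc (∅ : Finset ℕ)) = LinearMap.id := by
        rw [sortAsc, Finset.sort_empty, sI_nil W rfl, xcast_id]
      simp [h1, h2, tcast, xcast_id]
    rw [hD0, hT, hphi]
    have : Dmap V W 0 0 + Dmap V W 0 0 = 0 := by
      rw [← two_smul (ZMod 2) (Dmap V W 0 0), show (2 : ZMod 2) = 0 by decide, zero_smul]
    rw [this, add_zero, add_zero]
  · have hij : 0 < i + j := by omega
    rw [phi, dif_neg h00, LinearMap.comp_zero, add_zero, D0_eq, TD0T_eq, Dmap_eq,
      Finset.sum_filter, Finset.sum_filter, ← Finset.sum_add_distrib]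
    refine Finset.sum_congr rfl fun p hp => ?_
    rw [mem_shuffles] at hp
    obtain ⟨-, -, h3, h4⟩ := hp
    have h01 : 0 ∈ p.1 ∪ p.2 := by rw [h4]; exact Finset.mem_range.mpr hij
    rw [Finset.mem_union] at h01
    by_cases hc : 0 ∈ p.1
    · rw [if_pos hc, if_neg (fun hc2 => (Finset.disjoint_left.mp h3 hc) hc2), add_zero]
    · rw [if_neg hc, if_pos (h01.resolve_left hc), zero_add]
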